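/- Let n ≥ 2 and let E be a (2,3)-sparse edge set on the vertex set Fin n that is maximal among (2,3)-sparse edge sets, i.e., no (2,3)-sparse edge set on Fin n strictly contains E. Then |E| = 2n − 3. -/
import Mathlib


open Finset

variable {V : Type*} [Fintype V] [DecidableEq V]

/-- An edge set: a finite set of unordered pairs of distinct vertices (no loops). -/
def IsEdgeSet (E : Finset (Sym2 V)) : Prop := ∀ e ∈ E, ¬ e.IsDiag

/-- The vertex span `V(E)`: vertices incident to at least one edge of `E`. -/
def vertexSpan (E : Finset (Sym2 V)) : Finset V :=
  Finset.univ.filter fun v => ∃ e ∈ E, v ∈ e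

/-- `(2,3)`-sparsity: every nonempty subset `E' ⊆ E` has `|E'| ≤ 2|V(E')| - 3`. -/
def Sparse23 (E : Finset (Sym2 V)) : Prop :=
  ∀ E' ⊆ E, E'.Nonempty → (E'.card : ℤ) ≤ 2 * (vertexSpan E').card - 3

/-- An edge set is dependent if it is not `(2,3)`-sparse. -/
def DependentES (E : Finset (Sym2 V)) : Prop := ¬ Sparse23 E

/-- A rigidity circuit: a dependent edge set all of whose proper subsets are `(2,3)`-sparse. -/
def IsRigidityCircuit (E : Finset (Sym2 V)) : Prop :=
  IsEdgeSet E ∧ DependentES E ∧ ∀ E' ⊂ E, Sparse23 E'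

lemma mem_vertexSpan {E : Finset (Sym2 V)} {v : V} : v ∈ vertexSpan E ↔ ∃ e ∈ E, v ∈ e := by
  simp [vertexSpan]

lemma vertexSpan_mono {A B : Finset (Sym2 V)} (h : A ⊆ B) : vertexSpan A ⊆ vertexSpan B := by
  intro v hv
  rw [mem_vertexSpan] at hv ⊢
  obtain ⟨e, he, hve⟩ := hv
  exact ⟨e, h he, hve⟩

lemma vertexSpan_union (A B : Finset (Sym2 V)) :
    vertexSpan (A ∪ B) = vertexSpan A ∪ vertexSpan B := by
  ext v
  simp only [mem_vertexSpan, Finset.mem_union]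
  constructor
  · rintro ⟨e, he | he, hv⟩
    · exact Or.inl ⟨e, he, hv⟩
    · exact Or.inr ⟨e, he, hv⟩
  · rintro (⟨e, he, hv⟩ | ⟨e, he, hv⟩)
    · exact ⟨e, Or.inl he, hv⟩
    · exact ⟨e, Or.inr he, hv⟩

lemma vertexSpan_single {u v : V} : vertexSpan ({s(u,v)} : Finset (Sym2 V)) = {u, v} := by
  ext x
  simp [mem_vertexSpan, Sym2.mem_iff]

lemma two_le_span_card {E : Finset (Sym2 V)} (hE : IsEdgeSet E) (hne : E.Nonempty) :
    2 ≤ (vertexSpan E).card := by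
  obtain ⟨e, he⟩ := hne
  induction e using Sym2.ind with
  | _ a b =>
    have hab : a ≠ b := by
      intro h; exact hE _ he (by simp [h, Sym2.IsDiag])
    have hsub : ({a, b} : Finset V) ⊆ vertexSpan E := by
      intro x hx
      rw [mem_vertexSpan]
      refine ⟨s(a,b), he, ?_⟩
      simp only [Finset.mem_insert, Finset.mem_singleton] at hx
      rcases hx with rfl | rfl <;> simp
    calc 2 = ({a, b} : Finset V).card := by rw [Finset.card_insert_of_notMem (by simpa), Finset.card_singleton]
    _ ≤ _ := Finset.card_le_card hsub

lemma empty_of_span_small {X : Finset (Sym2 V)} (hX : IsEdgeSet X)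
    (h : (vertexSpan X).card ≤ 1) : X = ∅ := by
  by_contra hne
  have := two_le_span_card hX (Finset.nonempty_iff_ne_empty.mpr hne)
  omega

/-- A tight subset of `E`. -/
def TightIn (E T : Finset (Sym2 V)) : Prop :=
  T ⊆ E ∧ T.Nonempty ∧ (T.card : ℤ) = 2 * (vertexSpan T).card - 3

lemma span_inter_subset (A B : Finset (Sym2 V)) :
    vertexSpan (A ∩ B) ⊆ vertexSpan A ∩ vertexSpan B := by
  intro v hv
  rw [Finset.mem_inter]
  exact ⟨vertexSpan_mono Finset.inter_subset_left hv,
    vertexSpan_mono Finset.inter_subset_right hv⟩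

/-- Intersection bound: for subsets of a sparse set, `|A∩B| ≤ 2|V(A)∩V(B)| - 3`
provided the span intersection has at least two vertices. -/
lemma inter_card_bound {E A B : Finset (Sym2 V)} (hs : Sparse23 E)
    (hA : A ⊆ E) (h2 : 2 ≤ (vertexSpan A ∩ vertexSpan B).card) :
    ((A ∩ B).card : ℤ) ≤ 2 * (vertexSpan A ∩ vertexSpan B).card - 3 := by
  rcases (A ∩ B).eq_empty_or_nonempty with h | h
  · rw [h]
    simp only [Finset.card_empty, Nat.cast_zero]
    have : (2:ℤ) ≤ (vertexSpan A ∩ vertexSpan B).card := by exact_mod_cast h2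
    linarith
  · have h1 : ((A ∩ B).card : ℤ) ≤ 2 * (vertexSpan (A ∩ B)).card - 3 :=
      hs _ (Finset.Subset.trans Finset.inter_subset_left hA) h
    have h3 : (vertexSpan (A ∩ B)).card ≤ (vertexSpan A ∩ vertexSpan B).card :=
      Finset.card_le_card (span_inter_subset A B)
    have : ((vertexSpan (A ∩ B)).card : ℤ) ≤ (vertexSpan A ∩ vertexSpan B).card := by
      exact_mod_cast h3
    linarith

/-- Union of two tight sets whose spans share ≥ 2 vertices is tight. -/
lemma tight_union {E A B : Finset (Sym2 V)} (hs : Sparse23 E)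
    (hA : TightIn E A) (hB : TightIn E B)
    (h2 : 2 ≤ (vertexSpan A ∩ vertexSpan B).card) : TightIn E (A ∪ B) := by
  obtain ⟨hAE, hAne, hAc⟩ := hA
  obtain ⟨hBE, hBne, hBc⟩ := hB
  have hUE : A ∪ B ⊆ E := Finset.union_subset hAE hBE
  have hUne : (A ∪ B).Nonempty := hAne.mono Finset.subset_union_left
  refine ⟨hUE, hUne, ?_⟩
  have hle : ((A ∪ B).card : ℤ) ≤ 2 * (vertexSpan (A ∪ B)).card - 3 := hs _ hUE hUne
  have hcardU : (A ∪ B).card + (A ∩ B).card = A.card + B.card :=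
    Finset.card_union_add_card_inter A B
  have hvU : (vertexSpan (A ∪ B)).card + (vertexSpan A ∩ vertexSpan B).card
      = (vertexSpan A).card + (vertexSpan B).card := by
    rw [vertexSpan_union]
    exact Finset.card_union_add_card_inter _ _
  have hib := inter_card_bound hs hAE h2
  have hc1 : ((A ∪ B).card : ℤ) + (A ∩ B).card = A.card + B.card := by exact_mod_cast hcardU
  have hc2 : ((vertexSpan (A ∪ B)).card : ℤ) + (vertexSpan A ∩ vertexSpan B).card
      = (vertexSpan A).card + (vertexSpan B).card := by exact_mod_cast hvU
  linarith

/-- Every tight set has span at least 2. -/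
lemma tight_span_two {E T : Finset (Sym2 V)} (hE : IsEdgeSet E) (hT : TightIn E T) :
    2 ≤ (vertexSpan T).card :=
  two_le_span_card (fun e he => hE e (hT.1 he)) hT.2.1

/-- If `E` is maximal sparse, every pair of distinct vertices lies in the span of
some tight subset of `E`. -/
lemma linked {E : Finset (Sym2 V)} (hE : IsEdgeSet E) (hs : Sparse23 E)
    (hmax : ∀ E' : Finset (Sym2 V), IsEdgeSet E' → Sparse23 E' → ¬ E ⊂ E')
    {u v : V} (huv : u ≠ v) :
    ∃ T, TightIn E T ∧ u ∈ vertexSpan T ∧ v ∈ vertexSpan T := by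
  have hcard2 : ({u, v} : Finset V).card = 2 := by
    rw [Finset.card_insert_of_notMem (by simpa), Finset.card_singleton]
  by_cases he : s(u, v) ∈ E
  · refine ⟨{s(u,v)}, ⟨by simpa using he, Finset.singleton_nonempty _, ?_⟩, ?_, ?_⟩
    · rw [vertexSpan_single, Finset.card_singleton, hcard2]; norm_num
    · rw [vertexSpan_single]; simp
    · rw [vertexSpan_single]; simp
  · -- E ∪ {uv} is an edge set but not sparse
    set F := insert (s(u,v)) E with hF
    have hFE : IsEdgeSet F := by
      intro e heF
      rcases Finset.mem_insert.mp heF with rfl | heE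
      · simpa [Sym2.isDiag_iff_proj_eq] using huv
      · exact hE e heE
    have hssub : E ⊂ F := Finset.ssubset_insert he
    have hFns : ¬ Sparse23 F := fun h => hmax F hFE h hssub
    simp only [Sparse23, not_forall] at hFns
    obtain ⟨E', hE'F, hE'ne, hviol⟩ := hFns
    push_neg at hviol
    have hmemuv : s(u,v) ∈ E' := by
      by_contra hnm
      have : E' ⊆ E := fun x hx => by
        rcases Finset.mem_insert.mp (hE'F hx) with rfl | h
        · exact absurd hx hnm
        · exact h
      exact absurd (hs E' this hE'ne) (not_le.mpr hviol)
    set E'' := E'.erase (s(u,v)) with hE''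
    have hE''E : E'' ⊆ E := by
      intro x hx
      obtain ⟨hne, hxE'⟩ := Finset.mem_erase.mp hx
      rcases Finset.mem_insert.mp (hE'F hxE') with rfl | h
      · exact absurd rfl hne
      · exact h
    have hcard'' : E''.card + 1 = E'.card := Finset.card_erase_add_one hmemuv
    have hspan' : vertexSpan E'' ⊆ vertexSpan E' := vertexSpan_mono (Finset.erase_subset _ _)
    have huvspan : u ∈ vertexSpan E' ∧ v ∈ vertexSpan E' :=
      ⟨mem_vertexSpan.mpr ⟨_, hmemuv, by simp⟩, mem_vertexSpan.mpr ⟨_, hmemuv, by simp⟩⟩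
    have hE''ne : E''.Nonempty := by
      rcases E''.eq_empty_or_nonempty with h | h
      · exfalso
        have : E' = {s(u,v)} := by
          rcases (Finset.erase_eq_empty_iff E' (s(u,v))).mp h with h1 | h1
          · exact absurd h1 (Finset.nonempty_iff_ne_empty.mp hE'ne)
          · exact h1
        rw [this] at hviol
        rw [show vertexSpan ({s(u,v)} : Finset (Sym2 V)) = {u,v} from vertexSpan_single] at hviol
        rw [hcard2] at hviol
        norm_num at hviol
      · exact h
    have hsparse'' : (E''.card : ℤ) ≤ 2 * (vertexSpan E'').card - 3 := hs E'' hE''E hE''ne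
    have hspanle : (vertexSpan E'').card ≤ (vertexSpan E').card := Finset.card_le_card hspan'
    -- |E''| = |E'| - 1 ≥ 2|V(E')| - 3 ≥ 2|V(E'')| - 3 ≥ |E''|, all equal
    have h1 : ((E''.card : ℤ) + 1) = E'.card := by exact_mod_cast hcard''
    have h2 : ((vertexSpan E'').card : ℤ) ≤ (vertexSpan E').card := by exact_mod_cast hspanle
    have htight : (E''.card : ℤ) = 2 * (vertexSpan E'').card - 3 := by linarith
    have hspaneq : vertexSpan E'' = vertexSpan E' := by
      apply Finset.eq_of_subset_of_card_le hspan'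
      have : ((vertexSpan E').card : ℤ) ≤ (vertexSpan E'').card := by linarith
      exact_mod_cast this
    exact ⟨E'', ⟨hE''E, hE''ne, htight⟩, hspaneq ▸ huvspan.1, hspaneq ▸ huvspan.2⟩

lemma grow {E : Finset (Sym2 V)} (hE : IsEdgeSet E) (hs : Sparse23 E)
    (hlink : ∀ u v : V, u ≠ v → ∃ T, TightIn E T ∧ u ∈ vertexSpan T ∧ v ∈ vertexSpan T)
    {T : Finset (Sym2 V)} (hT : TightIn E T) {w : V} (hw : w ∉ vertexSpan T) :
    ∃ T', TightIn E T' ∧ vertexSpan T ⊆ vertexSpan T' ∧ w ∈ vertexSpan T' := by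
  set S := vertexSpan T with hS
  obtain ⟨u, hu, v, hv, huv⟩ := Finset.one_lt_card.mp (lt_of_lt_of_le one_lt_two (tight_span_two hE hT))
  have huw : u ≠ w := fun h => hw (h ▸ hu)
  have hvw : v ≠ w := fun h => hw (h ▸ hv)
  obtain ⟨Y, hY, huY, hwY⟩ := hlink u w huw
  obtain ⟨Z, hZ, hvZ, hwZ⟩ := hlink v w hvw
  set VY := vertexSpan Y with hVY
  set VZ := vertexSpan Z with hVZ
  by_cases hp : 2 ≤ (S ∩ VY).card
  · refine ⟨T ∪ Y, tight_union hs hT hY hp, ?_, ?_⟩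
    · rw [vertexSpan_union]; exact Finset.subset_union_left
    · rw [vertexSpan_union]; exact Finset.mem_union_right _ hwY
  by_cases hq : 2 ≤ (S ∩ VZ).card
  · refine ⟨T ∪ Z, tight_union hs hT hZ hq, ?_, ?_⟩
    · rw [vertexSpan_union]; exact Finset.subset_union_left
    · rw [vertexSpan_union]; exact Finset.mem_union_right _ hwZ
  by_cases hr : 2 ≤ (VY ∩ VZ).card
  · have hYZ : TightIn E (Y ∪ Z) := tight_union hs hY hZ hr
    have h2 : 2 ≤ (S ∩ vertexSpan (Y ∪ Z)).card := by
      have : ({u, v} : Finset V) ⊆ S ∩ vertexSpan (Y ∪ Z) := by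
        intro x hx
        rw [vertexSpan_union]
        simp only [Finset.mem_insert, Finset.mem_singleton] at hx
        rcases hx with rfl | rfl
        · exact Finset.mem_inter.mpr ⟨hu, Finset.mem_union_left _ huY⟩
        · exact Finset.mem_inter.mpr ⟨hv, Finset.mem_union_right _ hvZ⟩
      calc 2 = ({u, v} : Finset V).card := by
              rw [Finset.card_insert_of_notMem (by simpa), Finset.card_singleton]
        _ ≤ _ := Finset.card_le_card this
    refine ⟨T ∪ (Y ∪ Z), tight_union hs hT hYZ h2, ?_, ?_⟩
    · rw [vertexSpan_union]; exact Finset.subset_union_left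
    · rw [vertexSpan_union, vertexSpan_union]
      exact Finset.mem_union_right _ (Finset.mem_union_left _ hwY)
  -- hard case: all three span intersections are singletons
  push_neg at hp hq hr
  have hpu : S ∩ VY = {u} := by
    apply Finset.eq_singleton_iff_unique_mem.mpr
    refine ⟨Finset.mem_inter.mpr ⟨hu, huY⟩, fun x hx => ?_⟩
    by_contra hxu
    have : 2 ≤ (S ∩ VY).card := Finset.one_lt_card.mpr ⟨x, hx, u, Finset.mem_inter.mpr ⟨hu, huY⟩, hxu⟩
    omega
  have hqv : S ∩ VZ = {v} := by
    apply Finset.eq_singleton_iff_unique_mem.mpr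
    refine ⟨Finset.mem_inter.mpr ⟨hv, hvZ⟩, fun x hx => ?_⟩
    by_contra hxv
    have : 2 ≤ (S ∩ VZ).card := Finset.one_lt_card.mpr ⟨x, hx, v, Finset.mem_inter.mpr ⟨hv, hvZ⟩, hxv⟩
    omega
  have hrw : VY ∩ VZ = {w} := by
    apply Finset.eq_singleton_iff_unique_mem.mpr
    refine ⟨Finset.mem_inter.mpr ⟨hwY, hwZ⟩, fun x hx => ?_⟩
    by_contra hxw
    have : 2 ≤ (VY ∩ VZ).card := Finset.one_lt_card.mpr ⟨x, hx, w, Finset.mem_inter.mpr ⟨hwY, hwZ⟩, hxw⟩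
    omega
  -- pairwise edge-disjointness
  have hsubE : ∀ X : Finset (Sym2 V), X ⊆ E → IsEdgeSet X := fun X hX e he => hE e (hX he)
  have dTY : T ∩ Y = ∅ := by
    apply empty_of_span_small (hsubE _ (Finset.Subset.trans Finset.inter_subset_left hT.1))
    calc (vertexSpan (T ∩ Y)).card ≤ (S ∩ VY).card :=
          Finset.card_le_card (span_inter_subset T Y)
      _ = 1 := by rw [hpu, Finset.card_singleton]
  have dTZ : T ∩ Z = ∅ := by
    apply empty_of_span_small (hsubE _ (Finset.Subset.trans Finset.inter_subset_left hT.1))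
    calc (vertexSpan (T ∩ Z)).card ≤ (S ∩ VZ).card :=
          Finset.card_le_card (span_inter_subset T Z)
      _ = 1 := by rw [hqv, Finset.card_singleton]
  have dYZ : Y ∩ Z = ∅ := by
    apply empty_of_span_small (hsubE _ (Finset.Subset.trans Finset.inter_subset_left hY.1))
    calc (vertexSpan (Y ∩ Z)).card ≤ (VY ∩ VZ).card :=
          Finset.card_le_card (span_inter_subset Y Z)
      _ = 1 := by rw [hrw, Finset.card_singleton]
  -- card of the triple union
  set A := T ∪ Y ∪ Z with hA
  have hAE : A ⊆ E := Finset.union_subset (Finset.union_subset hT.1 hY.1) hZ.1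
  have hAcard : A.card = T.card + Y.card + Z.card := by
    rw [hA, Finset.card_union_of_disjoint, Finset.card_union_of_disjoint]
    · exact Finset.disjoint_iff_inter_eq_empty.mpr dTY
    · rw [Finset.disjoint_union_left]
      exact ⟨Finset.disjoint_iff_inter_eq_empty.mpr dTZ, Finset.disjoint_iff_inter_eq_empty.mpr dYZ⟩
  -- card of the span of the triple union
  have hspanA : vertexSpan A = S ∪ VY ∪ VZ := by
    rw [hA, vertexSpan_union, vertexSpan_union]
  have c1 : (S ∪ VY).card + 1 = S.card + VY.card := by
    have := Finset.card_union_add_card_inter S VY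
    rw [hpu, Finset.card_singleton] at this
    omega
  have c2 : ((S ∪ VY) ∩ VZ) = {v, w} := by
    rw [Finset.union_inter_distrib_right, hqv, hrw]
    rfl
  have c3 : (S ∪ VY ∪ VZ).card + 2 = (S ∪ VY).card + VZ.card := by
    have := Finset.card_union_add_card_inter (S ∪ VY) VZ
    rw [c2] at this
    have hvw2 : ({v, w} : Finset V).card = 2 := by
      rw [Finset.card_insert_of_notMem (by simpa), Finset.card_singleton]
    omega
  have hspanAcard : (vertexSpan A).card + 3 = S.card + VY.card + VZ.card := by
    rw [hspanA]
    omega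
  have hTc := hT.2.2
  have hYc := hY.2.2
  have hZc := hZ.2.2
  have hAtight : (A.card : ℤ) = 2 * (vertexSpan A).card - 3 := by
    have e1 : (A.card : ℤ) = T.card + Y.card + Z.card := by exact_mod_cast hAcard
    have e2 : ((vertexSpan A).card : ℤ) + 3 = S.card + VY.card + VZ.card := by
      exact_mod_cast hspanAcard
    rw [e1, hTc, hYc, hZc]
    linarith
  refine ⟨A, ⟨hAE, hT.2.1.mono (Finset.subset_union_left.trans Finset.subset_union_left), hAtight⟩, ?_, ?_⟩
  · rw [hspanA]
    exact Finset.subset_union_left.trans Finset.subset_union_left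
  · rw [hspanA]
    exact Finset.mem_union_left _ (Finset.mem_union_right _ hwY)

/-- A maximal `(2,3)`-sparse edge set on `Fin n`, `n ≥ 2`, has exactly `2n - 3` edges. -/
theorem maximal_sparse_card (n : ℕ) (hn : 2 ≤ n) (E : Finset (Sym2 (Fin n)))
    (hE : IsEdgeSet E) (hs : Sparse23 E)
    (hmax : ∀ E' : Finset (Sym2 (Fin n)), IsEdgeSet E' → Sparse23 E' → ¬ E ⊂ E') :
    (E.card : ℤ) = 2 * (n : ℤ) - 3 := by
  classical
  have hlink : ∀ u v : Fin n, u ≠ v →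
      ∃ T, TightIn E T ∧ u ∈ vertexSpan T ∧ v ∈ vertexSpan T :=
    fun u v huv => linked hE hs hmax huv
  have h01 : (⟨0, by omega⟩ : Fin n) ≠ ⟨1, by omega⟩ := by
    simp [Fin.ext_iff]
  obtain ⟨T0, hT0, _, _⟩ := hlink _ _ h01
  -- choose a tight set with maximal span
  set 𝒯 : Finset (Finset (Sym2 (Fin n))) := E.powerset.filter (fun T => TightIn E T) with h𝒯
  have hT0mem : T0 ∈ 𝒯 := by
    rw [h𝒯, Finset.mem_filter, Finset.mem_powerset]
    exact ⟨hT0.1, hT0⟩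
  obtain ⟨T, hTmem, hTbest⟩ := Finset.exists_max_image 𝒯 (fun T => (vertexSpan T).card) ⟨T0, hT0mem⟩
  have hT : TightIn E T := (Finset.mem_filter.mp hTmem).2
  -- its span must be everything
  have hspan : vertexSpan T = Finset.univ := by
    by_contra hne
    obtain ⟨w, hw⟩ : ∃ w, w ∉ vertexSpan T := by
      by_contra h
      push_neg at h
      exact hne (Finset.eq_univ_iff_forall.mpr h)
    obtain ⟨T', hT', hsub, hwT'⟩ := grow hE hs hlink hT hw
    have hT'mem : T' ∈ 𝒯 := by
      rw [h𝒯, Finset.mem_filter, Finset.mem_powerset]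
      exact ⟨hT'.1, hT'⟩
    have : (vertexSpan T).card < (vertexSpan T').card :=
      Finset.card_lt_card ⟨hsub, fun h => hw (h hwT')⟩
    exact absurd (hTbest T' hT'mem) (not_le.mpr this)
  -- conclude
  have hTcard : (T.card : ℤ) = 2 * (n : ℤ) - 3 := by
    have := hT.2.2
    rw [hspan] at this
    simpa [Finset.card_univ] using this
  have hEne : E.Nonempty := hT.2.1.mono hT.1
  have hEle : (E.card : ℤ) ≤ 2 * (vertexSpan E).card - 3 := hs E Finset.Subset.rfl hEne
  have hVle : (vertexSpan E).card ≤ n := by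
    simpa using Finset.card_le_card (Finset.subset_univ (vertexSpan E))
  have hTle : T.card ≤ E.card := Finset.card_le_card hT.1
  have h1 : ((vertexSpan E).card : ℤ) ≤ n := by exact_mod_cast hVle
  have h2 : (T.card : ℤ) ≤ E.card := by exact_mod_cast hTle
  linarith
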